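/- The λ-th unfolding matrix of the generalized Brownian tensor has matrix rank at most C(D, λ): for each 0 ≤ λ ≤ D, the N^λ × N^{D−λ} matrix M with entries M_{(i_1,...,i_λ),(i_{λ+1},...,i_D)} = C^{(D)}_{i_1,...,i_D} satisfies rank(M) ≤ C(D, λ), because C^{(D)}_{i_1,...,i_D} = Σ_{S ⊆ {1,...,D}, |S| = λ} C^{(λ)}_{i_1,...,i_λ}[μ_S] · C^{(D−λ)}_{i_{λ+1},...,i_D}[μ_{S^c}], where μ_S denotes the parameters indexed by S in increasing order. -/

import Mathlib

/-- The `λ`-th unfolding matrix of a `D`-dimensional tensor with mode sizes `N`. -/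
def ttUnfold (D N lam : ℕ) (h : lam ≤ D) (T : (Fin D → Fin N) → ℝ) :
    Matrix (Fin lam → Fin N) (Fin (D - lam) → Fin N) ℝ :=
  Matrix.of fun a b => T fun k =>
    if h' : (k : ℕ) < lam then a ⟨k, h'⟩ else b ⟨(k : ℕ) - lam, by have := k.2; omega⟩

open Finset

namespace BrownianAux

variable {D lam : ℕ}

lemma cardT (hlam : lam ≤ D) :
    (Finset.univ.filter fun p : Fin D => (p : ℕ) < lam).card = lam := by
  have h : (Finset.univ.filter fun p : Fin D => (p : ℕ) < lam)
      = Finset.map (Fin.castLEEmb hlam) Finset.univ := by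
    ext p
    simp only [mem_filter, mem_univ, true_and, Finset.mem_map]
    constructor
    · intro h; exact ⟨⟨p, h⟩, Fin.ext rfl⟩
    · rintro ⟨a, rfl⟩; exact a.2
  rw [h, Finset.card_map, Finset.card_univ, Fintype.card_fin]

lemma cardF (hlam : lam ≤ D) (σ : Equiv.Perm (Fin D)) :
    (Finset.univ.filter fun l : Fin D => ((σ l : Fin D) : ℕ) < lam).card = lam := by
  have h : (Finset.univ.filter fun l : Fin D => ((σ l : Fin D) : ℕ) < lam)
      = Finset.map σ.symm.toEmbedding (Finset.univ.filter fun p : Fin D => (p : ℕ) < lam) := by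
    ext l
    simp [Finset.mem_map_equiv]
  rw [h, Finset.card_map, cardT hlam]

lemma prod_emb {M : Type*} [CommMonoid M] (S : Finset (Fin D)) {k : ℕ} (hS : S.card = k)
    (g : Fin D → M) : (∏ j : Fin k, g (S.orderEmbOfFin hS j)) = ∏ x ∈ S, g x := by
  rw [← Finset.prod_coe_sort S g]
  exact Fintype.prod_equiv (S.orderIsoOfFin hS).toEquiv _ _ fun j =>
    congrArg g (Finset.coe_orderIsoOfFin_apply S hS j).symm

lemma card_compl_eq (hlam : lam ≤ D) (S : Finset (Fin D)) (hS : S.card = lam) :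
    Sᶜ.card = D - lam := by
  simp [Finset.card_compl, hS]

/-- forward map: restriction of `σ` to the first block -/
noncomputable def fwd1 (hlam : lam ≤ D) (S : Finset (Fin D)) (hS : S.card = lam)
    (σ : Equiv.Perm (Fin D)) (h : ∀ l, ((σ l : Fin D) : ℕ) < lam ↔ l ∈ S) :
    Equiv.Perm (Fin lam) :=
  Equiv.ofBijective
    (fun k => (⟨(σ (S.orderEmbOfFin hS k) : Fin D), (h _).2 (S.orderEmbOfFin_mem hS k)⟩ : Fin lam))
    (Finite.injective_iff_bijective.1 (fun a b hab => by
      have hv := congrArg Fin.val hab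
      exact (S.orderEmbOfFin hS).injective (σ.injective (Fin.ext hv))))

/-- forward map: restriction of `σ` to the second block -/
noncomputable def fwd2 (hlam : lam ≤ D) (S : Finset (Fin D)) (hS : S.card = lam)
    (σ : Equiv.Perm (Fin D)) (h : ∀ l, ((σ l : Fin D) : ℕ) < lam ↔ l ∈ S) :
    Equiv.Perm (Fin (D - lam)) :=
  Equiv.ofBijective
    (fun k => (⟨((σ (Sᶜ.orderEmbOfFin (card_compl_eq hlam S hS) k) : Fin D) : ℕ) - lam, by
      have hm := Sᶜ.orderEmbOfFin_mem (card_compl_eq hlam S hS) k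
      have hnot : ¬ (Sᶜ.orderEmbOfFin (card_compl_eq hlam S hS) k) ∈ S := Finset.mem_compl.1 hm
      have h1 : ¬ ((σ (Sᶜ.orderEmbOfFin (card_compl_eq hlam S hS) k) : Fin D) : ℕ) < lam :=
        fun hc => hnot ((h _).1 hc)
      have h2 := (σ (Sᶜ.orderEmbOfFin (card_compl_eq hlam S hS) k)).isLt
      omega⟩ : Fin (D - lam)))
    (Finite.injective_iff_bijective.1 (fun a b hab => by
      have hv : ((σ (Sᶜ.orderEmbOfFin (card_compl_eq hlam S hS) a) : Fin D) : ℕ) - lam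
          = ((σ (Sᶜ.orderEmbOfFin (card_compl_eq hlam S hS) b) : Fin D) : ℕ) - lam :=
        congrArg Fin.val hab
      have ha : ¬ ((σ (Sᶜ.orderEmbOfFin (card_compl_eq hlam S hS) a) : Fin D) : ℕ) < lam :=
        fun hc => (Finset.mem_compl.1 (Sᶜ.orderEmbOfFin_mem _ a)) ((h _).1 hc)
      have hb : ¬ ((σ (Sᶜ.orderEmbOfFin (card_compl_eq hlam S hS) b) : Fin D) : ℕ) < lam :=
        fun hc => (Finset.mem_compl.1 (Sᶜ.orderEmbOfFin_mem _ b)) ((h _).1 hc)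
      have hv' : ((σ (Sᶜ.orderEmbOfFin (card_compl_eq hlam S hS) a) : Fin D) : ℕ)
          = ((σ (Sᶜ.orderEmbOfFin (card_compl_eq hlam S hS) b) : Fin D) : ℕ) := by omega
      exact (Sᶜ.orderEmbOfFin _).injective (σ.injective (Fin.ext hv'))))

/-- backward map: glue two permutations along `S` -/
noncomputable def bwdFun (hlam : lam ≤ D) (S : Finset (Fin D)) (hS : S.card = lam)
    (σ₁ : Equiv.Perm (Fin lam)) (σ₂ : Equiv.Perm (Fin (D - lam))) : Fin D → Fin D :=
  fun l =>
    if h : l ∈ S then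
      ⟨(σ₁ ((S.orderIsoOfFin hS).symm ⟨l, h⟩) : ℕ), lt_of_lt_of_le (σ₁ _).2 hlam⟩
    else
      ⟨lam + (σ₂ ((Sᶜ.orderIsoOfFin (card_compl_eq hlam S hS)).symm ⟨l, Finset.mem_compl.2 h⟩) : ℕ),
        by
          have h2 := (σ₂ ((Sᶜ.orderIsoOfFin (card_compl_eq hlam S hS)).symm
            ⟨l, Finset.mem_compl.2 h⟩)).isLt
          omega⟩

lemma bwdFun_mem (hlam : lam ≤ D) (S : Finset (Fin D)) (hS : S.card = lam)
    (σ₁ : Equiv.Perm (Fin lam)) (σ₂ : Equiv.Perm (Fin (D - lam))) (l : Fin D) :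
    ((bwdFun hlam S hS σ₁ σ₂ l : Fin D) : ℕ) < lam ↔ l ∈ S := by
  unfold bwdFun
  by_cases h : l ∈ S
  · rw [dif_pos h]
    simpa [h] using (σ₁ ((S.orderIsoOfFin hS).symm ⟨l, h⟩)).isLt
  · rw [dif_neg h]
    simp [h]

lemma bwdFun_inj (hlam : lam ≤ D) (S : Finset (Fin D)) (hS : S.card = lam)
    (σ₁ : Equiv.Perm (Fin lam)) (σ₂ : Equiv.Perm (Fin (D - lam))) :
    Function.Injective (bwdFun hlam S hS σ₁ σ₂) := by
  intro a b hab
  have hva : ((bwdFun hlam S hS σ₁ σ₂ a : Fin D) : ℕ) = ((bwdFun hlam S hS σ₁ σ₂ b : Fin D) : ℕ) :=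
    congrArg Fin.val hab
  by_cases ha : a ∈ S <;> by_cases hb : b ∈ S
  · simp only [bwdFun, dif_pos ha, dif_pos hb] at hva
    have h1 : σ₁ ((S.orderIsoOfFin hS).symm ⟨a, ha⟩) = σ₁ ((S.orderIsoOfFin hS).symm ⟨b, hb⟩) :=
      Fin.ext hva
    have h2 := (S.orderIsoOfFin hS).symm.injective (σ₁.injective h1)
    exact congrArg Subtype.val h2
  · exfalso
    simp only [bwdFun, dif_pos ha, dif_neg hb] at hva
    have := (σ₁ ((S.orderIsoOfFin hS).symm ⟨a, ha⟩)).isLt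
    omega
  · exfalso
    simp only [bwdFun, dif_neg ha, dif_pos hb] at hva
    have := (σ₁ ((S.orderIsoOfFin hS).symm ⟨b, hb⟩)).isLt
    omega
  · simp only [bwdFun, dif_neg ha, dif_neg hb] at hva
    have h1 : σ₂ ((Sᶜ.orderIsoOfFin (card_compl_eq hlam S hS)).symm ⟨a, Finset.mem_compl.2 ha⟩)
        = σ₂ ((Sᶜ.orderIsoOfFin (card_compl_eq hlam S hS)).symm ⟨b, Finset.mem_compl.2 hb⟩) :=
      Fin.ext (by omega)
    have h2 := (Sᶜ.orderIsoOfFin (card_compl_eq hlam S hS)).symm.injective (σ₂.injective h1)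
    exact congrArg Subtype.val h2

noncomputable def bwd (hlam : lam ≤ D) (S : Finset (Fin D)) (hS : S.card = lam)
    (σ₁ : Equiv.Perm (Fin lam)) (σ₂ : Equiv.Perm (Fin (D - lam))) : Equiv.Perm (Fin D) :=
  Equiv.ofBijective _ (Finite.injective_iff_bijective.1 (bwdFun_inj hlam S hS σ₁ σ₂))

lemma bwd_apply (hlam : lam ≤ D) (S : Finset (Fin D)) (hS : S.card = lam)
    (σ₁ : Equiv.Perm (Fin lam)) (σ₂ : Equiv.Perm (Fin (D - lam))) (l : Fin D) :
    bwd hlam S hS σ₁ σ₂ l = bwdFun hlam S hS σ₁ σ₂ l := rfl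

lemma symm_orderIso_emb (S : Finset (Fin D)) {k : ℕ} (hS : S.card = k) (j : Fin k)
    (h : S.orderEmbOfFin hS j ∈ S) :
    (S.orderIsoOfFin hS).symm ⟨S.orderEmbOfFin hS j, h⟩ = j := by
  rw [OrderIso.symm_apply_eq]
  exact Subtype.ext (Finset.coe_orderIsoOfFin_apply S hS j)

lemma bwd_emb1 (hlam : lam ≤ D) (S : Finset (Fin D)) (hS : S.card = lam)
    (σ₁ : Equiv.Perm (Fin lam)) (σ₂ : Equiv.Perm (Fin (D - lam))) (k : Fin lam) :
    bwd hlam S hS σ₁ σ₂ (S.orderEmbOfFin hS k)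
      = ⟨(σ₁ k : ℕ), lt_of_lt_of_le (σ₁ k).2 hlam⟩ := by
  rw [bwd_apply]
  unfold bwdFun
  rw [dif_pos (S.orderEmbOfFin_mem hS k)]
  exact Fin.ext (congrArg (fun t => (σ₁ t : ℕ)) (symm_orderIso_emb S hS k _))

lemma bwd_emb2 (hlam : lam ≤ D) (S : Finset (Fin D)) (hS : S.card = lam)
    (σ₁ : Equiv.Perm (Fin lam)) (σ₂ : Equiv.Perm (Fin (D - lam))) (k : Fin (D - lam)) :
    bwd hlam S hS σ₁ σ₂ (Sᶜ.orderEmbOfFin (card_compl_eq hlam S hS) k)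
      = ⟨lam + (σ₂ k : ℕ), by have := (σ₂ k).isLt; omega⟩ := by
  rw [bwd_apply]
  unfold bwdFun
  have hm : ¬ Sᶜ.orderEmbOfFin (card_compl_eq hlam S hS) k ∈ S :=
    Finset.mem_compl.1 (Sᶜ.orderEmbOfFin_mem _ k)
  rw [dif_neg hm]
  exact Fin.ext (congrArg (fun t => lam + (σ₂ t : ℕ))
    (symm_orderIso_emb Sᶜ (card_compl_eq hlam S hS) k _))


lemma emb_symm (S : Finset (Fin D)) {k : ℕ} (hS : S.card = k) (x : Fin D) (h : x ∈ S) :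
    S.orderEmbOfFin hS ((S.orderIsoOfFin hS).symm ⟨x, h⟩) = x := by
  have h1 := Finset.coe_orderIsoOfFin_apply S hS ((S.orderIsoOfFin hS).symm ⟨x, h⟩)
  rw [OrderIso.apply_symm_apply] at h1
  exact h1.symm

lemma key (hlam : lam ≤ D) (f : Fin D → Fin D → ℝ) :
    (∑ σ : Equiv.Perm (Fin D), ∏ k, f (σ k) k)
      = ∑ S : {S : Finset (Fin D) // S.card = lam},
          (∑ σ : Equiv.Perm (Fin lam),
            ∏ k, f ⟨σ k, lt_of_lt_of_le (σ k).2 hlam⟩ (S.1.orderEmbOfFin S.2 k))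
        * (∑ σ : Equiv.Perm (Fin (D - lam)),
            ∏ k, f ⟨lam + σ k, Nat.lt_of_lt_of_le (Nat.add_lt_add_left (σ k).isLt lam) (Nat.add_sub_of_le hlam).le⟩
              ((S.1ᶜ).orderEmbOfFin (card_compl_eq hlam S.1 S.2) k)) := by
  classical
  rw [← Finset.sum_fiberwise Finset.univ
    (fun σ : Equiv.Perm (Fin D) =>
      (⟨Finset.univ.filter fun l => ((σ l : Fin D) : ℕ) < lam, cardF hlam σ⟩
        : {S : Finset (Fin D) // S.card = lam}))
    (fun σ => ∏ k, f (σ k) k)]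
  refine Finset.sum_congr rfl fun S _ => ?_
  rw [Fintype.sum_mul_sum, ← Fintype.sum_prod_type']
  have hmem : ∀ σ : Equiv.Perm (Fin D), σ ∈ Finset.univ.filter (fun σ : Equiv.Perm (Fin D) =>
      (⟨Finset.univ.filter fun l => ((σ l : Fin D) : ℕ) < lam, cardF hlam σ⟩
        : {S : Finset (Fin D) // S.card = lam}) = S) →
      ∀ l, ((σ l : Fin D) : ℕ) < lam ↔ l ∈ S.1 := by
    intro σ hσ l
    have h1 := (Finset.mem_filter.1 hσ).2
    have h2 : (Finset.univ.filter fun l => ((σ l : Fin D) : ℕ) < lam) = S.1 :=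
      congrArg Subtype.val h1
    rw [← h2]
    simp
  refine Finset.sum_bij'
    (i := fun σ hσ => (fwd1 hlam S.1 S.2 σ (hmem σ hσ), fwd2 hlam S.1 S.2 σ (hmem σ hσ)))
    (j := fun p _ => bwd hlam S.1 S.2 p.1 p.2)
    (fun σ hσ => Finset.mem_univ _)
    (fun p _ => ?hj) (fun σ hσ => ?hli) (fun p _ => ?hri) (fun σ hσ => ?hval)
  case hj =>
    refine Finset.mem_filter.2 ⟨Finset.mem_univ _, Subtype.ext (Finset.ext fun l => ?_)⟩
    simp only [Finset.mem_filter, Finset.mem_univ, true_and]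
    exact bwdFun_mem hlam S.1 S.2 p.1 p.2 l
  case hli =>
    ext l
    have h := hmem σ hσ
    rw [bwd_apply]
    unfold bwdFun
    by_cases hl : l ∈ S.1
    · rw [dif_pos hl]
      show ((fwd1 hlam S.1 S.2 σ (hmem σ hσ)) ((S.1.orderIsoOfFin S.2).symm ⟨l, hl⟩) : ℕ) = _
      unfold fwd1
      show ((σ (S.1.orderEmbOfFin S.2 ((S.1.orderIsoOfFin S.2).symm ⟨l, hl⟩)) : Fin D) : ℕ) = _
      rw [emb_symm S.1 S.2 l hl]
    · rw [dif_neg hl]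
      show lam + ((fwd2 hlam S.1 S.2 σ (hmem σ hσ))
        ((S.1ᶜ.orderIsoOfFin (card_compl_eq hlam S.1 S.2)).symm ⟨l, Finset.mem_compl.2 hl⟩) : ℕ)
          = (σ l : ℕ)
      unfold fwd2
      show lam + (((σ (S.1ᶜ.orderEmbOfFin (card_compl_eq hlam S.1 S.2)
        ((S.1ᶜ.orderIsoOfFin (card_compl_eq hlam S.1 S.2)).symm
          ⟨l, Finset.mem_compl.2 hl⟩)) : Fin D) : ℕ) - lam) = (σ l : ℕ)
      rw [emb_symm S.1ᶜ (card_compl_eq hlam S.1 S.2) l (Finset.mem_compl.2 hl)]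
      have hge : ¬ ((σ l : Fin D) : ℕ) < lam := fun hc => hl ((h l).1 hc)
      omega
  case hri =>
    refine Prod.ext ?_ ?_
    · ext k
      show ((bwd hlam S.1 S.2 p.1 p.2 (S.1.orderEmbOfFin S.2 k) : Fin D) : ℕ) = (p.1 k : ℕ)
      rw [bwd_emb1]
    · ext k
      show ((bwd hlam S.1 S.2 p.1 p.2
          (S.1ᶜ.orderEmbOfFin (card_compl_eq hlam S.1 S.2) k) : Fin D) : ℕ) - lam = (p.2 k : ℕ)
      rw [bwd_emb2]
      simp
  case hval =>
    have h := hmem σ hσ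
    rw [← Finset.prod_mul_prod_compl S.1 (fun k => f (σ k) k)]
    congr 1
    · rw [← prod_emb S.1 S.2 (fun x => f (σ x) x)]
      refine Finset.prod_congr rfl fun k _ => ?_
      exact congrArg (fun t => f t (S.1.orderEmbOfFin S.2 k)) (Fin.ext rfl)
    · rw [show S.1ᶜ.orderEmbOfFin (by simp [Finset.card_compl, S.2])
          = S.1ᶜ.orderEmbOfFin (card_compl_eq hlam S.1 S.2) from rfl]
      rw [← prod_emb S.1ᶜ (card_compl_eq hlam S.1 S.2) (fun x => f (σ x) x)]
      refine Finset.prod_congr rfl fun k _ => ?_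
      have hnot : ¬ (S.1ᶜ.orderEmbOfFin (card_compl_eq hlam S.1 S.2) k) ∈ S.1 :=
        Finset.mem_compl.1 (S.1ᶜ.orderEmbOfFin_mem _ k)
      have hge : ¬ ((σ (S.1ᶜ.orderEmbOfFin (card_compl_eq hlam S.1 S.2) k) : Fin D) : ℕ) < lam :=
        fun hc => hnot ((h _).1 hc)
      have he : σ (S.1ᶜ.orderEmbOfFin (card_compl_eq hlam S.1 S.2) k)
          = (⟨lam + (((fwd2 hlam S.1 S.2 σ h) k : Fin (D - lam)) : ℕ), by
              have := ((fwd2 hlam S.1 S.2 σ h) k).isLt; omega⟩ : Fin D) := by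
        refine Fin.ext ?_
        show ((σ (S.1ᶜ.orderEmbOfFin (card_compl_eq hlam S.1 S.2) k) : Fin D) : ℕ)
          = lam + (((σ (S.1ᶜ.orderEmbOfFin (card_compl_eq hlam S.1 S.2) k) : Fin D) : ℕ) - lam)
        omega
      exact congrArg (fun t => f t (S.1ᶜ.orderEmbOfFin (card_compl_eq hlam S.1 S.2) k)) he

lemma matrank_add_le {m n : Type*} [Fintype m] [Fintype n] (A B : Matrix m n ℝ) :
    (A + B).rank ≤ A.rank + B.rank := by
  classical
  rw [Matrix.rank, Matrix.rank, Matrix.rank, Matrix.mulVecLin_add]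
  have hle : LinearMap.range (A.mulVecLin + B.mulVecLin)
      ≤ LinearMap.range A.mulVecLin ⊔ LinearMap.range B.mulVecLin := by
    rintro x ⟨y, rfl⟩
    exact Submodule.mem_sup.2 ⟨A.mulVecLin y, ⟨y, rfl⟩, B.mulVecLin y, ⟨y, rfl⟩, rfl⟩
  exact le_trans (Submodule.finrank_mono hle)
    (Submodule.finrank_add_le_finrank_add_finrank _ _)

lemma matrank_sum_le {m n ι : Type*} [Fintype m] [Fintype n] (s : Finset ι)
    (f : ι → Matrix m n ℝ) : (∑ i ∈ s, f i).rank ≤ ∑ i ∈ s, (f i).rank := by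
  classical
  induction s using Finset.induction with
  | empty => simp [Matrix.rank_zero]
  | insert _ _ h ih =>
    rw [Finset.sum_insert h, Finset.sum_insert h]
    exact le_trans (matrank_add_le _ _) (add_le_add_right ih _)

lemma matrank_outer_le {m n : Type*} [Fintype m] [Fintype n] [DecidableEq m] [DecidableEq n]
    (u : m → ℝ) (v : n → ℝ) : (Matrix.of fun a b => u a * v b : Matrix m n ℝ).rank ≤ 1 := by
  have hfac : (Matrix.of fun a b => u a * v b : Matrix m n ℝ)
      = (Matrix.of fun a (_ : Fin 1) => u a) * (Matrix.of fun (_ : Fin 1) b => v b) := by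
    ext a b
    simp [Matrix.mul_apply]
  rw [hfac]
  refine le_trans (Matrix.rank_mul_le_left _ _) ?_
  simpa using Matrix.rank_le_card_width (Matrix.of fun a (_ : Fin 1) => u a)

end BrownianAux

/-- Splitting identity `C^{(D)} = Σ_{|S| = λ} C^{(λ)}[μ_S] ⊗ C^{(D-λ)}[μ_{Sᶜ}]`, and
consequently the `λ`-th unfolding of the generalized Brownian tensor has rank at most
`C(D,λ)`. -/
theorem brownian_unfolding_rank (D N lam : ℕ) (hD : 1 ≤ D) (hlam : lam ≤ D)
    (μ : Fin D → ℝ) :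
    (∀ i : Fin D → Fin N,
      (∑ σ : Equiv.Perm (Fin D), ∏ k, (((i (σ k) : ℕ) : ℝ) + 1) ^ (μ k))
        = ∑ S : {S : Finset (Fin D) // S.card = lam},
            (∑ σ : Equiv.Perm (Fin lam),
              ∏ k, (((i ⟨σ k, lt_of_lt_of_le (σ k).2 hlam⟩ : ℕ) : ℝ) + 1)
                ^ (μ (S.1.orderEmbOfFin S.2 k)))
          * (∑ σ : Equiv.Perm (Fin (D - lam)),
              ∏ k, (((i ⟨lam + σ k, by have := (σ k).2; omega⟩ : ℕ) : ℝ) + 1)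
                ^ (μ ((S.1ᶜ).orderEmbOfFin (by simp [Finset.card_compl, S.2]) k))))
    ∧ (ttUnfold D N lam hlam
        (fun i => ∑ σ : Equiv.Perm (Fin D), ∏ k, (((i (σ k) : ℕ) : ℝ) + 1) ^ (μ k))).rank
        ≤ D.choose lam := by
  classical
  have hpart1 : ∀ i : Fin D → Fin N,
      (∑ σ : Equiv.Perm (Fin D), ∏ k, (((i (σ k) : ℕ) : ℝ) + 1) ^ (μ k))
        = ∑ S : {S : Finset (Fin D) // S.card = lam},
            (∑ σ : Equiv.Perm (Fin lam),
              ∏ k, (((i ⟨σ k, lt_of_lt_of_le (σ k).2 hlam⟩ : ℕ) : ℝ) + 1)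
                ^ (μ (S.1.orderEmbOfFin S.2 k)))
          * (∑ σ : Equiv.Perm (Fin (D - lam)),
              ∏ k, (((i ⟨lam + σ k, by have := (σ k).2; omega⟩ : ℕ) : ℝ) + 1)
                ^ (μ ((S.1ᶜ).orderEmbOfFin (by simp [Finset.card_compl, S.2]) k))) :=
    fun i => BrownianAux.key hlam (fun p l => (((i p : ℕ) : ℝ) + 1) ^ (μ l))
  refine ⟨hpart1, ?_⟩
  set u : {S : Finset (Fin D) // S.card = lam} → (Fin lam → Fin N) → ℝ :=
    fun S a => ∑ σ : Equiv.Perm (Fin lam),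
      ∏ k, (((a (σ k) : ℕ) : ℝ) + 1) ^ (μ (S.1.orderEmbOfFin S.2 k)) with hu
  set v : {S : Finset (Fin D) // S.card = lam} → (Fin (D - lam) → Fin N) → ℝ :=
    fun S b => ∑ σ : Equiv.Perm (Fin (D - lam)),
      ∏ k, (((b (σ k) : ℕ) : ℝ) + 1)
        ^ (μ ((S.1ᶜ).orderEmbOfFin (by simp [Finset.card_compl, S.2]) k)) with hv
  have hM : ttUnfold D N lam hlam
      (fun i => ∑ σ : Equiv.Perm (Fin D), ∏ k, (((i (σ k) : ℕ) : ℝ) + 1) ^ (μ k))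
      = ∑ S : {S : Finset (Fin D) // S.card = lam},
          Matrix.of (fun a b => u S a * v S b) := by
    ext a b
    rw [Matrix.sum_apply]
    show (∑ σ : Equiv.Perm (Fin D), ∏ k,
        ((((fun j : Fin D => if h' : (j : ℕ) < lam then a ⟨j, h'⟩
            else b ⟨(j : ℕ) - lam, by have := j.2; omega⟩) (σ k) : ℕ) : ℝ) + 1) ^ (μ k)) = _
    rw [hpart1 (fun j : Fin D => if h' : (j : ℕ) < lam then a ⟨j, h'⟩
      else b ⟨(j : ℕ) - lam, by have := j.2; omega⟩)]
    refine Finset.sum_congr rfl fun S _ => ?_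
    simp only [Matrix.of_apply]
    congr 1
    · refine Finset.sum_congr rfl fun σ _ => Finset.prod_congr rfl fun k _ => ?_
      have he : (fun j : Fin D => if h' : (j : ℕ) < lam then a ⟨j, h'⟩
            else b ⟨(j : ℕ) - lam, by have := j.2; omega⟩)
            (⟨(σ k : ℕ), lt_of_lt_of_le (σ k).2 hlam⟩ : Fin D) = a (σ k) := by
        show (if h' : (σ k : ℕ) < lam then a ⟨(σ k : ℕ), h'⟩
            else b ⟨(σ k : ℕ) - lam, _⟩) = a (σ k)
        rw [dif_pos (σ k).isLt]
        try exact congrArg a (Fin.ext rfl)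
      exact congrArg (fun t : Fin N => (((t : ℕ) : ℝ) + 1)
        ^ (μ (S.1.orderEmbOfFin S.2 k))) he
    · refine Finset.sum_congr rfl fun σ _ => Finset.prod_congr rfl fun k _ => ?_
      have he : (fun j : Fin D => if h' : (j : ℕ) < lam then a ⟨j, h'⟩
            else b ⟨(j : ℕ) - lam, by have := j.2; omega⟩)
            (⟨lam + (σ k : ℕ), by have := (σ k).2; omega⟩ : Fin D) = b (σ k) := by
        show (if h' : lam + (σ k : ℕ) < lam then a ⟨lam + (σ k : ℕ), h'⟩
            else b ⟨lam + (σ k : ℕ) - lam, _⟩) = b (σ k)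
        rw [dif_neg (by omega : ¬ lam + (σ k : ℕ) < lam)]
        try exact congrArg b (Fin.ext (by simp))
      exact congrArg (fun t : Fin N => (((t : ℕ) : ℝ) + 1)
        ^ (μ ((S.1ᶜ).orderEmbOfFin (by simp [Finset.card_compl, S.2]) k))) he
  rw [hM]
  refine le_trans (BrownianAux.matrank_sum_le _ _) ?_
  have hb : ∀ S ∈ (Finset.univ : Finset {S : Finset (Fin D) // S.card = lam}),
      (Matrix.of (fun a b => u S a * v S b)).rank ≤ 1 :=
    fun S _ => BrownianAux.matrank_outer_le (u S) (v S)
  refine le_trans (Finset.sum_le_sum hb) ?_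
  rw [Finset.sum_const, Nat.smul_one_eq_cast, Nat.cast_id, Finset.card_univ,
    Fintype.card_finset_len, Fintype.card_fin]
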